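/- Let a > 0 and let h be a C² real-valued function on a real interval I with h > 0 and |h'| < 1 on I, satisfying h''(t) = (1 − h'(t)²)/(a·h(t)) for all t ∈ I. Then the function t ↦ h(t)^{−1/a}/√(1 − h'(t)²) is constant on I. -/

import Mathlib

/-- The quantity `h^{-1/a} / √(1 - h'²)` is a first integral of the ODE
`h'' = (1 - h'²)/(a·h)` on any real interval. -/
theorem conserved_quantity (a : ℝ) (ha : 0 < a) (I : Set ℝ) (hI : I.OrdConnected)
    (h h' h'' : ℝ → ℝ)
    (hd1 : ∀ t ∈ I, HasDerivAt h (h' t) t)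
    (hd2 : ∀ t ∈ I, HasDerivAt h' (h'' t) t)
    (hpos : ∀ t ∈ I, 0 < h t)
    (hder : ∀ t ∈ I, |h' t| < 1)
    (hode : ∀ t ∈ I, h'' t = (1 - h' t ^ 2) / (a * h t)) :
    ∀ s ∈ I, ∀ t ∈ I,
      h s ^ (-(1 / a) : ℝ) / Real.sqrt (1 - h' s ^ 2) =
        h t ^ (-(1 / a) : ℝ) / Real.sqrt (1 - h' t ^ 2) := by
  set p : ℝ := -(1/a) with hp
  set F : ℝ → ℝ := fun t => h t ^ p / Real.sqrt (1 - h' t ^ 2) with hFdef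
  have key : ∀ t ∈ I, HasDerivAt F 0 t := by
    intro t ht
    have hpt := hpos t ht
    have habs := hder t ht
    have hu : 0 < 1 - h' t ^ 2 := by
      nlinarith [abs_nonneg (h' t), sq_abs (h' t)]
    have hsq : 0 < Real.sqrt (1 - h' t ^ 2) := Real.sqrt_pos.2 hu
    have d1 : HasDerivAt (fun s => h s ^ p) (h' t * p * h t ^ (p - 1)) t :=
      (hd1 t ht).rpow_const (Or.inl hpt.ne')
    have du : HasDerivAt (fun s => 1 - h' s ^ 2) (0 - 2 * h' t ^ 1 * h'' t) t := by
      simpa using ((hd2 t ht).pow 2).const_sub (1:ℝ)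
    have dsq : HasDerivAt (fun s => Real.sqrt (1 - h' s ^ 2))
        ((0 - 2 * h' t ^ 1 * h'' t) / (2 * Real.sqrt (1 - h' t ^ 2))) t :=
      du.sqrt hu.ne'
    have dF := d1.div dsq hsq.ne'
    refine dF.congr_deriv (Eq.symm ?_)
    have hss : Real.sqrt (1 - h' t ^ 2) * Real.sqrt (1 - h' t ^ 2) = 1 - h' t ^ 2 :=
      Real.mul_self_sqrt hu.le
    have hrw : h t ^ (p - 1) = h t ^ p / h t := Real.rpow_sub_one hpt.ne' p
    rw [hode t ht, hrw, hp]
    have hss2 : Real.sqrt (1 - h' t ^ 2) ^ 2 = 1 - h' t ^ 2 := Real.sq_sqrt hu.le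
    field_simp
    linear_combination (2 * h' t * h t ^ (-(1 / a))) * hss
  intro s hs t ht
  have hconv : Convex ℝ I := hI.convex
  have := hconv.norm_image_sub_le_of_norm_hasDerivWithin_le
    (f := F) (f' := fun _ => (0:ℝ)) (C := 0)
    (fun x hx => (key x hx).hasDerivWithinAt) (fun x hx => by simp) ht hs
  have : F s = F t := by
    simp at this
    linarith [abs_nonneg (F s - F t), abs_sub_abs_le_abs_sub (F s) (F t)]
  simpa [hFdef] using this
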